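/- In SL(2,ℤ), with A = [[1,-1],[0,1]] and B = [[1,0],[1,1]], the subgroup generated by the family {f_n = A^{-(n+3)}XA^n : n ∈ ℤ} (where X = ABA) equals the subgroup generated by the two elements f_{-2} and f_{-1}. -/

import Mathlib

abbrev SL2Z := Matrix.SpecialLinearGroup (Fin 2) ℤ

def A : SL2Z := ⟨!![1, -1; 0, 1], by decide⟩
def B : SL2Z := ⟨!![1, 0; 1, 1], by decide⟩
def X : SL2Z := ⟨!![0, -1; 1, 0], by decide⟩

def f (n : ℤ) : SL2Z := A ^ (-(n + 3)) * X * A ^ n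

lemma key : X * A * X⁻¹ = A⁻¹ * X * A⁻¹ := by
  ext i j
  simp only [Matrix.SpecialLinearGroup.coe_mul, Matrix.SpecialLinearGroup.coe_inv]
  fin_cases i <;> fin_cases j <;>
    simp [A, X, Matrix.SpecialLinearGroup.coe_inv, Matrix.adjugate_fin_two,
      Matrix.mul_apply, Fin.sum_univ_two]

lemma f_rec (n : ℤ) : f (n + 1) = f n * (f (n - 1))⁻¹ := by
  have h1 : f n * (f (n - 1))⁻¹ = A ^ (-(n + 3)) * (X * A * X⁻¹) * A ^ (n + 2) := by
    simp only [f]; group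
  have h2 : f (n + 1) = A ^ (-(n + 3)) * (A⁻¹ * X * A⁻¹) * A ^ (n + 2) := by
    simp only [f]; group
  rw [h1, h2, key]

lemma f_mem (n : ℤ) :
    f n ∈ Subgroup.closure ({f (-2), f (-1)} : Set SL2Z) := by
  set H := Subgroup.closure ({f (-2), f (-1)} : Set SL2Z) with hH
  have h2 : f (-2) ∈ H := Subgroup.subset_closure (by simp)
  have h1 : f (-1) ∈ H := Subgroup.subset_closure (by simp)
  have main : ∀ i : ℕ, (f ((i : ℤ) - 2) ∈ H ∧ f ((i : ℤ) - 1) ∈ H) ∧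
      (f (-(i : ℤ) - 2) ∈ H ∧ f (-(i : ℤ) - 1) ∈ H) := by
    intro i
    induction i with
    | zero => exact ⟨⟨h2, h1⟩, ⟨h2, h1⟩⟩
    | succ k ih =>
      obtain ⟨⟨u1, u2⟩, ⟨d1, d2⟩⟩ := ih
      constructor
      · refine ⟨by convert u2 using 2; push_cast; ring, ?_⟩
        have := f_rec ((k : ℤ) - 1)
        have hmem : f ((k : ℤ) - 1 + 1) ∈ H := by
          rw [this]
          exact H.mul_mem u2 (H.inv_mem (by convert u1 using 2; ring))
        convert hmem using 2; push_cast; ring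
      · refine ⟨?_, by convert d1 using 2; push_cast; ring⟩
        -- f (m - 1) = (f (m+1))⁻¹ * f m  with m = -(k:ℤ) - 2
        have hr := f_rec (-(k : ℤ) - 2)
        have : f (-(k : ℤ) - 2 - 1) = (f (-(k : ℤ) - 2 + 1))⁻¹ * f (-(k : ℤ) - 2) := by
          rw [hr]; group
        have hmem : f (-(k : ℤ) - 2 - 1) ∈ H := by
          rw [this]
          exact H.mul_mem (H.inv_mem (by convert d2 using 2; ring)) d1
        convert hmem using 2; push_cast; ring
  rcases le_or_gt 0 n with h | h
  · obtain ⟨i, rfl⟩ : ∃ i : ℕ, n = (i : ℤ) - 2 + 2 := ⟨n.toNat, by omega⟩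
    have := ((main (i + 2)).1).1
    convert this using 2; push_cast; ring
  · obtain ⟨i, rfl⟩ : ∃ i : ℕ, n = -(i : ℤ) - 1 := ⟨(-n - 1).toNat, by omega⟩
    exact (main i).2.2

theorem stmt17 :
    Subgroup.closure (Set.range f) = Subgroup.closure ({f (-2), f (-1)} : Set SL2Z) := by
  apply le_antisymm
  · rw [Subgroup.closure_le]
    rintro x ⟨n, rfl⟩
    exact f_mem n
  · apply Subgroup.closure_mono
    rintro x (rfl | rfl) <;> exact Set.mem_range_self _
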